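/- Fix reals a > b > 0, w0 > 0, w1 > 0 and λ > 0 such that w1·(a − b) ≤ w0·a, and set γ = w0/(2·λ·ln 2) − 1/a. For p0, p1 ≥ 0 define L1(p0, p1) = (w0/2)·log2((1 + a·(p0 + p1))/(1 + a·p1)) + (w1/2)·log2((1 + a·p1)/(1 + b·p1)) − λ·(p0 + p1). Then L1(p0, p1) ≤ L1(max(γ, 0), 0) for all p0, p1 ≥ 0; i.e., allocating no power to the confidential message and power [γ]⁺ to the common message is optimal. -/

import Mathlib

open Real

-- Bernoulli-type: b * log(1+a*t) ≤ a * log(1+b*t)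
lemma lemA {a b t : ℝ} (hb : 0 < b) (hba : b ≤ a) (ht : 0 ≤ t) :
    b * Real.log (1 + a * t) ≤ a * Real.log (1 + b * t) := by
  have ha : 0 < a := hb.trans_le hba
  have hx : (1:ℝ) ∈ Set.Ioi (0:ℝ) := by norm_num
  have hy : (1 + a * t) ∈ Set.Ioi (0:ℝ) := by
    simp only [Set.mem_Ioi]; nlinarith
  have hσ : 0 ≤ 1 - b / a := by
    have : b / a ≤ 1 := (div_le_one ha).mpr hba
    linarith
  have hτ : 0 ≤ b / a := by positivity
  have hsum : (1 - b / a) + b / a = 1 := by ring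
  have h := (strictConcaveOn_log_Ioi.concaveOn).2 hx hy hσ hτ hsum
  have hcomb : (1 - b / a) • (1:ℝ) + (b / a) • (1 + a * t) = 1 + b * t := by
    field_simp
    linear_combination (b * t + 1) * mul_inv_cancel₀ ha.ne'
  rw [hcomb, Real.log_one, smul_eq_mul, smul_eq_mul, mul_zero, zero_add] at h
  have := mul_le_mul_of_nonneg_left h ha.le
  calc b * Real.log (1 + a * t) = a * (b / a * Real.log (1 + a * t)) := by field_simp
    _ ≤ a * Real.log (1 + b * t) := this

-- tangent bound: log y - log x ≤ (y - x)/x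
lemma lemB {x y : ℝ} (hx : 0 < x) (hy : 0 < y) :
    Real.log y - Real.log x ≤ (y - x) / x := by
  have h := Real.log_le_sub_one_of_pos (x := y / x) (by positivity)
  rw [Real.log_div hy.ne' hx.ne'] at h
  have : y / x - 1 = (y - x) / x := by field_simp
  linarith [this ▸ h]

-- core: cleared version
lemma core (a b w0 w1 lam : ℝ) (hb : 0 < b) (hba : b < a)
    (hw0 : 0 < w0) (hw1 : 0 < w1) (hlam : 0 < lam)
    (hcase : w1 * (a - b) ≤ w0 * a) (p0 p1 : ℝ) (hp0 : 0 ≤ p0) (hp1 : 0 ≤ p1) :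
    w0 * (Real.log (1 + a * (p0 + p1)) - Real.log (1 + a * p1)) +
      w1 * (Real.log (1 + a * p1) - Real.log (1 + b * p1)) -
      2 * lam * Real.log 2 * (p0 + p1) ≤
    w0 * Real.log (1 + a * max (w0 / (2 * lam * Real.log 2) - 1 / a) 0) -
      2 * lam * Real.log 2 * max (w0 / (2 * lam * Real.log 2) - 1 / a) 0 := by
  have ha : 0 < a := hb.trans hba
  have hln2 : 0 < Real.log 2 := Real.log_pos (by norm_num)
  set γ : ℝ := w0 / (2 * lam * Real.log 2) - 1 / a with hγ
  set Q : ℝ := max γ 0 with hQ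
  have hQ0 : 0 ≤ Q := le_max_right _ _
  have hP : 0 ≤ p0 + p1 := by linarith
  have h1a : (0:ℝ) < 1 + a * (p0 + p1) := by nlinarith
  have h1a1 : (0:ℝ) < 1 + a * p1 := by nlinarith
  have h1b1 : (0:ℝ) < 1 + b * p1 := by nlinarith
  have h1Q : (0:ℝ) < 1 + a * Q := by nlinarith
  -- Step 1
  have hLa : 0 ≤ Real.log (1 + a * p1) := Real.log_nonneg (by nlinarith)
  have hA := lemA hb hba.le hp1
  have step1 : w1 * (Real.log (1 + a * p1) - Real.log (1 + b * p1)) ≤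
      w0 * Real.log (1 + a * p1) := by
    have h2 := mul_le_mul_of_nonneg_left hA hw1.le
    have h3 := mul_le_mul_of_nonneg_right hcase hLa
    nlinarith
  -- Step 2
  have hBB := lemB h1Q h1a
  have step2 : w0 * (Real.log (1 + a * (p0 + p1)) - Real.log (1 + a * Q)) ≤
      2 * lam * Real.log 2 * (p0 + p1) - 2 * lam * Real.log 2 * Q := by
    have hkey : w0 * ((1 + a * (p0 + p1) - (1 + a * Q)) / (1 + a * Q)) ≤
        2 * lam * Real.log 2 * (p0 + p1) - 2 * lam * Real.log 2 * Q := by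
      rcases le_or_gt 0 γ with hg | hg
      · have hQγ : Q = γ := max_eq_left hg
        have hval : 1 + a * Q = w0 * a / (2 * lam * Real.log 2) := by
          rw [hQγ, hγ]; field_simp; ring
        rw [hQγ]
        have heq : w0 * ((1 + a * (p0 + p1) - (1 + a * γ)) / (1 + a * γ)) =
            2 * lam * Real.log 2 * (p0 + p1) - 2 * lam * Real.log 2 * γ := by
          have hvalγ : 1 + a * γ = w0 * a / (2 * lam * Real.log 2) := by
            rw [hγ]; field_simp; ring
          rw [hvalγ, hγ]
          field_simp
          ring
        exact heq.le
      · have hQ0' : Q = 0 := max_eq_right hg.le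
        have hwa : w0 * a ≤ 2 * lam * Real.log 2 := by
          have : w0 / (2 * lam * Real.log 2) < 1 / a := by linarith [hγ ▸ hg]
          rw [div_lt_div_iff₀ (by positivity) ha] at this
          linarith
        rw [hQ0']
        have : w0 * ((1 + a * (p0 + p1) - (1 + a * 0)) / (1 + a * 0)) = w0 * a * (p0 + p1) := by
          field_simp; ring
        rw [this]
        nlinarith
    calc w0 * (Real.log (1 + a * (p0 + p1)) - Real.log (1 + a * Q))
        ≤ w0 * ((1 + a * (p0 + p1) - (1 + a * Q)) / (1 + a * Q)) :=
          mul_le_mul_of_nonneg_left hBB hw0.le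
      _ ≤ _ := hkey
  linarith [step1, step2]


/-- When `w1·(a − b) ≤ w0·a`, allocating no power to the confidential message
and power `[γ]⁺` to the common message is optimal for the per-sub-channel
Lagrangian `L1`. -/
theorem L1_max_no_confidential (a b w0 w1 lam : ℝ) (hb : 0 < b) (hba : b < a)
    (hw0 : 0 < w0) (hw1 : 0 < w1) (hlam : 0 < lam)
    (hcase : w1 * (a - b) ≤ w0 * a) :
    let γ : ℝ := w0 / (2 * lam * Real.log 2) - 1 / a
    let L1 : ℝ → ℝ → ℝ := fun p0 p1 =>
      (w0 / 2) * Real.logb 2 ((1 + a * (p0 + p1)) / (1 + a * p1)) +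
      (w1 / 2) * Real.logb 2 ((1 + a * p1) / (1 + b * p1)) - lam * (p0 + p1)
    ∀ p0 p1 : ℝ, 0 ≤ p0 → 0 ≤ p1 → L1 p0 p1 ≤ L1 (max γ 0) 0 := by
  intro γ L1 p0 p1 hp0 hp1
  have ha : 0 < a := hb.trans hba
  have hln2 : 0 < Real.log 2 := Real.log_pos (by norm_num)
  have hcore := core a b w0 w1 lam hb hba hw0 hw1 hlam hcase p0 p1 hp0 hp1
  have h1a : (0:ℝ) < 1 + a * (p0 + p1) := by nlinarith
  have h1a1 : (0:ℝ) < 1 + a * p1 := by nlinarith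
  have h1b1 : (0:ℝ) < 1 + b * p1 := by nlinarith
  have hQ0 : (0:ℝ) ≤ max γ 0 := le_max_right _ _
  have h1Q : (0:ℝ) < 1 + a * max γ 0 := by nlinarith
  simp only [L1, add_zero, mul_zero, div_one, Real.logb, Real.log_one,
    Real.log_div h1a.ne' h1a1.ne', Real.log_div h1a1.ne' h1b1.ne', zero_div]
  have hγ : γ = w0 / (2 * lam * Real.log 2) - 1 / a := rfl
  rw [← hγ] at hcore
  rw [← sub_nonneg]
  have h2 : (0:ℝ) < 2 * Real.log 2 := by positivity
  have hrw : w0 / 2 * (Real.log (1 + a * (γ ⊔ 0)) / Real.log 2) - lam * (γ ⊔ 0) -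
      (w0 / 2 * ((Real.log (1 + a * (p0 + p1)) - Real.log (1 + a * p1)) / Real.log 2) +
       w1 / 2 * ((Real.log (1 + a * p1) - Real.log (1 + b * p1)) / Real.log 2) -
       lam * (p0 + p1)) =
      (w0 * Real.log (1 + a * (γ ⊔ 0)) - 2 * lam * Real.log 2 * (γ ⊔ 0) -
       (w0 * (Real.log (1 + a * (p0 + p1)) - Real.log (1 + a * p1)) +
        w1 * (Real.log (1 + a * p1) - Real.log (1 + b * p1)) -
        2 * lam * Real.log 2 * (p0 + p1))) / (2 * Real.log 2) := by
    field_simp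
  rw [hrw]
  apply div_nonneg _ h2.le
  linarith [hcore]
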